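/- Let N* := P₀⁻¹ · P₁_KK and let ∇f denote the column vector of partial derivatives (∂f/∂p_x, ∂f/∂p_y, ∂f/∂x, ∂f/∂y). Then at every point with y ≠ 0: N*·∇H_KK = M₁₁·∇H_KK + M₁₂·∇K_KK and N*·∇K_KK = M₂₁·∇H_KK + M₂₂·∇K_KK, where M₁₁ = −2a·x − 3p_y²/y² + 3μ/y⁴, M₁₂ = −1/(12y²), M₂₂ = −2a·x − 3p_y²/y² − 3μ/y⁴, and M₂₁ = −(12/y²)(K_KK + 6μ·M₂₂). In particular the span of ∇H_KK and ∇K_KK is invariant under N*. -/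

import Mathlib

set_option maxHeartbeats 1600000


open Matrix

/-- Partial derivative `∂f/∂z^l` at `z`, coordinates `z = (p_x, p_y, x, y)`. -/
noncomputable def pd (l : Fin 4) (f : (Fin 4 → ℝ) → ℝ) (z : Fin 4 → ℝ) : ℝ :=
  fderiv ℝ f z (Pi.single l 1)

/-- Gradient column vector `(∂f/∂p_x, ∂f/∂p_y, ∂f/∂x, ∂f/∂y)`. -/
noncomputable def grad (f : (Fin 4 → ℝ) → ℝ) (z : Fin 4 → ℝ) : Fin 4 → ℝ :=
  fun i => pd i f z

/-- The canonical Poisson tensor `P₀` in the ordering `(p_x, p_y, x, y)`. -/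
def P0 : Matrix (Fin 4) (Fin 4) ℝ :=
  !![0, 0, -1, 0;
     0, 0, 0, -1;
     1, 0, 0, 0;
     0, 1, 0, 0]

/-- The deformed Poisson tensor `P₁` for the Kaup–Kupershmidt system. -/
noncomputable def P1KK (a ω : ℝ) (z : Fin 4 → ℝ) : Matrix (Fin 4) (Fin 4) ℝ :=
  let px := z 0; let py := z 1; let x := z 2; let y := z 3
  !![0, 6*py*(a*y^2 + 8*x*(a*x+ω))/y^2, -(4*a*x+3*ω), 2*(a*y^2 + 24*x*(a*x+ω))/y;
     -(6*py*(a*y^2 + 8*x*(a*x+ω))/y^2), 0, -(a*y) + 3*px*py/y^2, 8*a*x + 3*ω + 6*py^2/y^2;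
     4*a*x+3*ω, a*y - 3*px*py/y^2, 0, -(3*px)/y;
     -(2*(a*y^2 + 24*x*(a*x+ω))/y), -(8*a*x + 3*ω + 6*py^2/y^2), 3*px/y, 0]

/-- The adjoint recursion operator `N* = P₀⁻¹ · P₁_KK`. -/
noncomputable def NstarKK (a ω : ℝ) (z : Fin 4 → ℝ) : Matrix (Fin 4) (Fin 4) ℝ :=
  P0⁻¹ * P1KK a ω z

/-- The Kaup–Kupershmidt Hamiltonian, as a function of `z = (p_x, p_y, x, y)`. -/
noncomputable def HKK (a ω μ : ℝ) (z : Fin 4 → ℝ) : ℝ :=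
  let px := z 0; let py := z 1; let x := z 2; let y := z 3
  (1/2) * (px^2 + py^2) + 8*ω*x^2 + (ω/2)*y^2 + a*x*y^2 + (16*a/3)*x^3 + μ/(2*y^2)

/-- The Kaup–Kupershmidt quartic integral, as a function of `z = (p_x, p_y, x, y)`. -/
noncomputable def KKK (a ω μ : ℝ) (z : Fin 4 → ℝ) : ℝ :=
  let px := z 0; let py := z 1; let x := z 2; let y := z 3
  9*(ω*y^2 + py^2 + μ/y^2)^2 + 12*a*py*y^2*(3*x*py - y*px)
    - 2*a^2*y^4*(6*x^2 + y^2) + 12*a*x*(μ - ω*y^4) - 18*ω*μ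

noncomputable def prj (i : Fin 4) : (Fin 4 → ℝ) →L[ℝ] ℝ := ContinuousLinearMap.proj i

noncomputable def Lc (c : Fin 4 → ℝ) : (Fin 4 → ℝ) →L[ℝ] ℝ :=
  ∑ i, c i • prj i

lemma Lc_apply (c v : Fin 4 → ℝ) : Lc c v = c 0 * v 0 + c 1 * v 1 + c 2 * v 2 + c 3 * v 3 := by
  simp [Lc, prj, Fin.sum_univ_four, ContinuousLinearMap.proj_apply, mul_comm]

lemma grad_of_hasFDerivAt {f : (Fin 4 → ℝ) → ℝ} {c : Fin 4 → ℝ} {z : Fin 4 → ℝ}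
    (h : HasFDerivAt f (Lc c) z) : grad f z = c := by
  funext l
  have : pd l f z = Lc c (Pi.single l 1) := by rw [pd, h.fderiv]
  rw [grad, this]
  fin_cases l <;> simp [Lc_apply, Pi.single_apply]

lemma hasFDerivAt_HKK (a ω μ : ℝ) (z : Fin 4 → ℝ) (hy : z 3 ≠ 0) :
    HasFDerivAt (HKK a ω μ)
      (Lc ![z 0, z 1, 16*ω*(z 2) + a*(z 3)^2 + 16*a*(z 2)^2,
           ω*(z 3) + 2*a*(z 2)*(z 3) - μ/(z 3)^3]) z := by
  have hf : HKK a ω μ = (fun z : Fin 4 → ℝ =>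
      (1/2)*(z 0*z 0 + z 1*z 1) + 8*ω*(z 2*z 2) + (ω/2)*(z 3*z 3)
        + a*(z 2*(z 3*z 3)) + (16*a/3)*(z 2*(z 2*z 2)) + μ*(2*(z 3*z 3))⁻¹) := by
    funext w; simp only [HKK, div_eq_mul_inv]; ring
  rw [hf]
  have h0 : HasFDerivAt (fun z : Fin 4 → ℝ => z 0) (prj 0) z := hasFDerivAt_apply 0 z
  have h1 : HasFDerivAt (fun z : Fin 4 → ℝ => z 1) (prj 1) z := hasFDerivAt_apply 1 z
  have h2 : HasFDerivAt (fun z : Fin 4 → ℝ => z 2) (prj 2) z := hasFDerivAt_apply 2 z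
  have h3 : HasFDerivAt (fun z : Fin 4 → ℝ => z 3) (prj 3) z := hasFDerivAt_apply 3 z
  have hden : (2*(z 3 * z 3)) ≠ 0 := mul_ne_zero two_ne_zero (mul_ne_zero hy hy)
  have key := (((((((h0.mul h0).add (h1.mul h1)).const_mul (1/2)).add
      ((h2.mul h2).const_mul (8*ω))).add ((h3.mul h3).const_mul (ω/2))).add
      ((h2.mul (h3.mul h3)).const_mul a)).add ((h2.mul (h2.mul h2)).const_mul (16*a/3))).add
      (((hasDerivAt_inv hden).comp_hasFDerivAt z ((h3.mul h3).const_mul 2)).const_mul μ)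
  simp only [Function.comp_def] at key
  refine key.congr_fderiv ?_
  ext v
  simp only [ContinuousLinearMap.add_apply, ContinuousLinearMap.smul_apply,
    ContinuousLinearMap.coe_smul', Pi.smul_apply, Lc_apply, prj,
    ContinuousLinearMap.proj_apply, smul_eq_mul, Matrix.cons_val_zero, Matrix.cons_val_one,
    Matrix.head_cons, Matrix.cons_val_two, Matrix.tail_cons, Matrix.cons_val_three,
    Pi.mul_apply, Pi.add_apply, Pi.sub_apply, Function.comp_apply]
  field_simp
  ring

lemma hasFDerivAt_KKK (a ω μ : ℝ) (z : Fin 4 → ℝ) (hy : z 3 ≠ 0) :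
    HasFDerivAt (KKK a ω μ)
      (Lc ![-12*a*(z 1)*(z 3)^3,
        36*(z 1)*(ω*(z 3)^2+(z 1)^2+μ/(z 3)^2) + 12*a*(z 3)^2*(6*(z 2)*(z 1) - (z 3)*(z 0)),
        36*a*(z 1)^2*(z 3)^2 - 24*a^2*(z 3)^4*(z 2) + 12*a*(μ - ω*(z 3)^4),
        18*(ω*(z 3)^2+(z 1)^2+μ/(z 3)^2)*(2*ω*(z 3)-2*μ/(z 3)^3)
          + 24*a*(z 1)*(z 3)*(3*(z 2)*(z 1)-(z 3)*(z 0)) - 12*a*(z 1)*(z 3)^2*(z 0)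
          - 2*a^2*(4*(z 3)^3*(6*(z 2)^2+(z 3)^2)+2*(z 3)^5) - 48*a*(z 2)*ω*(z 3)^3]) z := by
  have hf : KKK a ω μ = (fun z : Fin 4 → ℝ =>
      9*((ω*(z 3*z 3) + z 1*z 1 + μ*(z 3*z 3)⁻¹)*(ω*(z 3*z 3) + z 1*z 1 + μ*(z 3*z 3)⁻¹))
        + (12*a)*((z 1*(z 3*z 3))*(3*(z 2*z 1) - z 3*z 0))
        - (2*a^2)*(((z 3*z 3)*(z 3*z 3))*(6*(z 2*z 2)+z 3*z 3))
        + (12*a)*(z 2*(μ - ω*((z 3*z 3)*(z 3*z 3)))) - 18*ω*μ) := by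
    funext w; simp only [KKK, div_eq_mul_inv]; ring
  rw [hf]
  have h0 : HasFDerivAt (fun z : Fin 4 → ℝ => z 0) (prj 0) z := hasFDerivAt_apply 0 z
  have h1 : HasFDerivAt (fun z : Fin 4 → ℝ => z 1) (prj 1) z := hasFDerivAt_apply 1 z
  have h2 : HasFDerivAt (fun z : Fin 4 → ℝ => z 2) (prj 2) z := hasFDerivAt_apply 2 z
  have h3 : HasFDerivAt (fun z : Fin 4 → ℝ => z 3) (prj 3) z := hasFDerivAt_apply 3 z
  have hden : (z 3 * z 3) ≠ 0 := mul_ne_zero hy hy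
  have hq := (((h3.mul h3).const_mul ω).add (h1.mul h1)).add
      (((hasDerivAt_inv hden).comp_hasFDerivAt z (h3.mul h3)).const_mul μ)
  have key := (((((hq.mul hq).const_mul 9).add
      (((h1.mul (h3.mul h3)).mul (((h2.mul h1).const_mul 3).sub (h3.mul h0))).const_mul (12*a))).sub
      ((((h3.mul h3).mul (h3.mul h3)).mul (((h2.mul h2).const_mul 6).add (h3.mul h3))).const_mul (2*a^2))).add
      ((h2.mul ((hasFDerivAt_const μ z).sub (((h3.mul h3).mul (h3.mul h3)).const_mul ω))).const_mul (12*a))).sub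
      (hasFDerivAt_const (18*ω*μ) z)
  simp only [Function.comp_def] at key
  refine key.congr_fderiv ?_
  ext v
  simp only [ContinuousLinearMap.add_apply, ContinuousLinearMap.sub_apply,
    ContinuousLinearMap.smul_apply, ContinuousLinearMap.coe_smul', Pi.smul_apply, Lc_apply, prj,
    ContinuousLinearMap.proj_apply, smul_eq_mul, Matrix.cons_val_zero, Matrix.cons_val_one,
    Matrix.head_cons, Matrix.cons_val_two, Matrix.tail_cons, Matrix.cons_val_three,
    ContinuousLinearMap.zero_apply, Pi.mul_apply, Pi.add_apply, Pi.sub_apply, Function.comp_apply]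
  field_simp
  ring

lemma grad_HKK (a ω μ : ℝ) (z : Fin 4 → ℝ) (hy : z 3 ≠ 0) :
    grad (HKK a ω μ) z = ![z 0, z 1, 16*ω*(z 2) + a*(z 3)^2 + 16*a*(z 2)^2,
      ω*(z 3) + 2*a*(z 2)*(z 3) - μ/(z 3)^3] :=
  grad_of_hasFDerivAt (hasFDerivAt_HKK a ω μ z hy)

lemma grad_KKK (a ω μ : ℝ) (z : Fin 4 → ℝ) (hy : z 3 ≠ 0) :
    grad (KKK a ω μ) z = ![-12*a*(z 1)*(z 3)^3,
        36*(z 1)*(ω*(z 3)^2+(z 1)^2+μ/(z 3)^2) + 12*a*(z 3)^2*(6*(z 2)*(z 1) - (z 3)*(z 0)),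
        36*a*(z 1)^2*(z 3)^2 - 24*a^2*(z 3)^4*(z 2) + 12*a*(μ - ω*(z 3)^4),
        18*(ω*(z 3)^2+(z 1)^2+μ/(z 3)^2)*(2*ω*(z 3)-2*μ/(z 3)^3)
          + 24*a*(z 1)*(z 3)*(3*(z 2)*(z 1)-(z 3)*(z 0)) - 12*a*(z 1)*(z 3)^2*(z 0)
          - 2*a^2*(4*(z 3)^3*(6*(z 2)^2+(z 3)^2)+2*(z 3)^5) - 48*a*(z 2)*ω*(z 3)^3] :=
  grad_of_hasFDerivAt (hasFDerivAt_KKK a ω μ z hy)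

lemma P0_inv : P0⁻¹ = !![0, 0, 1, 0; 0, 0, 0, 1; -1, 0, 0, 0; 0, -1, 0, 0] := by
  apply Matrix.inv_eq_right_inv
  ext i j
  fin_cases i <;> fin_cases j <;>
    simp [P0, Matrix.mul_apply, Fin.sum_univ_four, Matrix.one_apply,
      Matrix.vecHead, Matrix.vecTail]

/-- the codistribution spanned by `∇H_KK, ∇K_KK` is invariant under
`N* = P₀⁻¹·P₁_KK`, with control matrix entries
`M₁₁ = −2ax − 3p_y²/y² + 3μ/y⁴`, `M₁₂ = −1/(12y²)`,
`M₂₂ = −2ax − 3p_y²/y² − 3μ/y⁴`, `M₂₁ = −(12/y²)(K_KK + 6μ·M₂₂)`. -/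
theorem NstarKK_control_matrix (a ω μ : ℝ) (z : Fin 4 → ℝ) (hy : z 3 ≠ 0) :
    (NstarKK a ω z).mulVec (grad (HKK a ω μ) z)
        = (-2*a*(z 2) - 3*(z 1)^2/(z 3)^2 + 3*μ/(z 3)^4) • grad (HKK a ω μ) z
          + (-1/(12*(z 3)^2)) • grad (KKK a ω μ) z
    ∧ (NstarKK a ω z).mulVec (grad (KKK a ω μ) z)
        = (-(12/(z 3)^2) * (KKK a ω μ z
              + 6*μ*(-2*a*(z 2) - 3*(z 1)^2/(z 3)^2 - 3*μ/(z 3)^4))) • grad (HKK a ω μ) z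
          + (-2*a*(z 2) - 3*(z 1)^2/(z 3)^2 - 3*μ/(z 3)^4) • grad (KKK a ω μ) z
    ∧ ∀ v ∈ Submodule.span ℝ ({grad (HKK a ω μ) z, grad (KKK a ω μ) z} : Set (Fin 4 → ℝ)),
        (NstarKK a ω z).mulVec v
          ∈ Submodule.span ℝ ({grad (HKK a ω μ) z, grad (KKK a ω μ) z} : Set (Fin 4 → ℝ)) := by
  have hH : (NstarKK a ω z).mulVec (grad (HKK a ω μ) z)
        = (-2*a*(z 2) - 3*(z 1)^2/(z 3)^2 + 3*μ/(z 3)^4) • grad (HKK a ω μ) z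
          + (-1/(12*(z 3)^2)) • grad (KKK a ω μ) z := by
    rw [grad_HKK a ω μ z hy, grad_KKK a ω μ z hy]
    funext i
    rw [NstarKK, ← Matrix.mulVec_mulVec, P0_inv]
    fin_cases i <;>
      · simp [Matrix.mulVec, dotProduct, Fin.sum_univ_four, P1KK, KKK]
        field_simp
        ring
  have hK : (NstarKK a ω z).mulVec (grad (KKK a ω μ) z)
        = (-(12/(z 3)^2) * (KKK a ω μ z
              + 6*μ*(-2*a*(z 2) - 3*(z 1)^2/(z 3)^2 - 3*μ/(z 3)^4))) • grad (HKK a ω μ) z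
          + (-2*a*(z 2) - 3*(z 1)^2/(z 3)^2 - 3*μ/(z 3)^4) • grad (KKK a ω μ) z := by
    rw [grad_HKK a ω μ z hy, grad_KKK a ω μ z hy]
    funext i
    rw [NstarKK, ← Matrix.mulVec_mulVec, P0_inv]
    fin_cases i <;>
      · simp [Matrix.mulVec, dotProduct, Fin.sum_univ_four, P1KK, KKK]
        field_simp
        ring
  refine ⟨hH, hK, ?_⟩
  intro v hv
  rw [Submodule.mem_span_pair] at hv
  obtain ⟨m, n, rfl⟩ := hv
  have h1 : grad (HKK a ω μ) z ∈ Submodule.span ℝ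
      ({grad (HKK a ω μ) z, grad (KKK a ω μ) z} : Set (Fin 4 → ℝ)) :=
    Submodule.subset_span (by simp)
  have h2 : grad (KKK a ω μ) z ∈ Submodule.span ℝ
      ({grad (HKK a ω μ) z, grad (KKK a ω μ) z} : Set (Fin 4 → ℝ)) :=
    Submodule.subset_span (by simp)
  rw [Matrix.mulVec_add, Matrix.mulVec_smul, Matrix.mulVec_smul, hH, hK]
  exact Submodule.add_mem _
    (Submodule.smul_mem _ _ (Submodule.add_mem _
      (Submodule.smul_mem _ _ h1) (Submodule.smul_mem _ _ h2)))
    (Submodule.smul_mem _ _ (Submodule.add_mem _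
      (Submodule.smul_mem _ _ h1) (Submodule.smul_mem _ _ h2)))
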